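/- Let X₁,…,Xₙ be ℕ-valued random variables on a probability space with S = X₁+⋯+Xₙ and S₋₁ = X₂+⋯+Xₙ. Suppose X₁ has a binomial distribution with parameters m ∈ ℕ⁺ and q ∈ (0, 1/2), and that X₁ is independent of S₋₁. Then for every integer k ≥ 1, E[X₁ · 1_{\{S=k\}}] = m · ∑_{j=1}^{k} (−1)^{j+1} · (q/(1−q))^j · P(S = k−j). -/

import Mathlib

open MeasureTheory ProbabilityTheory

lemma altsum_aux (m' : ℕ) : ∀ t : ℕ, ∑ i ∈ Finset.range (t+1), (-1:ℤ)^i * ((m'+1).choose (t-i)) = m'.choose t := by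
  intro t
  induction t with
  | zero => simp
  | succ t ih =>
    rw [Finset.sum_range_succ']
    have h1 : ∀ i ∈ Finset.range (t+1), (-1:ℤ)^(i+1) * ((m'+1).choose (t+1-(i+1)))
        = -((-1:ℤ)^i * ((m'+1).choose (t-i))) := by
      intro i hi
      have : t + 1 - (i+1) = t - i := by omega
      rw [this, pow_succ]; ring
    rw [Finset.sum_congr rfl h1, Finset.sum_neg_distrib, ih]
    simp [Nat.choose_succ_succ' (m') (t)]

lemma iccsum_aux (m' x : ℕ) (hx : 1 ≤ x) :
    ∑ j ∈ Finset.Icc 1 x, (-1:ℤ)^(j+1) * ((m'+1).choose (x-j)) = m'.choose (x-1) := by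
  obtain ⟨t, rfl⟩ : ∃ t, x = t + 1 := ⟨x - 1, by omega⟩
  simp only [Nat.add_sub_cancel]
  rw [← altsum_aux m' t]
  refine Finset.sum_nbij' (fun j => j - 1) (fun i => i + 1) ?_ ?_ ?_ ?_ ?_
  · intro a ha; simp at ha ⊢; omega
  · intro a ha; simp at ha ⊢; omega
  · intro a ha; simp at ha; omega
  · intro a ha; simp
  · intro j hj
    simp at hj
    have h1 : t + 1 - j = t - (j - 1) := by omega
    have h2 : j + 1 = (j - 1) + 2 := by omega
    rw [h1, h2, pow_add]
    ring

lemma intkey_aux (m x : ℕ) (hm : 0 < m) (hx : 1 ≤ x) :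
    (x:ℤ) * m.choose x = m * ∑ j ∈ Finset.Icc 1 x, (-1:ℤ)^(j+1) * (m.choose (x-j)) := by
  obtain ⟨m', rfl⟩ : ∃ m', m = m' + 1 := ⟨m - 1, by omega⟩
  rw [iccsum_aux m' x hx]
  obtain ⟨t, rfl⟩ : ∃ t, x = t + 1 := ⟨x - 1, by omega⟩
  have := Nat.add_one_mul_choose_eq m' t
  simp only [Nat.add_sub_cancel]
  have h2 : ((m'+1:ℕ):ℤ) * (m'.choose t : ℤ) = ((m'+1).choose (t+1) : ℤ) * ((t+1:ℕ):ℤ) := by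
    exact_mod_cast congrArg (Nat.cast : ℕ → ℤ) this
  push_cast at h2 ⊢
  linarith

lemma realkey_aux (m : ℕ) (hm : 0 < m) (q : ℝ) (hq0 : 0 < q) (hq1 : q < 1) (x : ℕ) :
    (x:ℝ) * ((m.choose x) * q^x * (1-q)^(m-x))
      = m * ∑ j ∈ Finset.Icc 1 x, (-1:ℝ)^(j+1) * (q/(1-q))^j
          * ((m.choose (x-j)) * q^(x-j) * (1-q)^(m-(x-j))) := by
  rcases Nat.eq_zero_or_pos x with rfl | hx
  · simp
  have h1q : (0:ℝ) < 1 - q := by linarith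
  have h1q' : (1:ℝ) - q ≠ 0 := ne_of_gt h1q
  apply mul_left_cancel₀ (pow_ne_zero x h1q')
  have hL : (1-q)^x * ((x:ℝ) * ((m.choose x) * q^x * (1-q)^(m-x)))
      = ((x:ℝ) * (m.choose x)) * (q^x * (1-q)^m) := by
    by_cases hxm : x ≤ m
    · have e : (1-q)^x * (1-q)^(m-x) = (1-q)^m := by
        rw [← pow_add]; congr 1; omega
      calc (1-q)^x * ((x:ℝ) * ((m.choose x) * q^x * (1-q)^(m-x)))
          = ((x:ℝ) * (m.choose x)) * (q^x * ((1-q)^x * (1-q)^(m-x))) := by ring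
        _ = ((x:ℝ) * (m.choose x)) * (q^x * (1-q)^m) := by rw [e]
    · rw [Nat.choose_eq_zero_of_lt (by omega)]; simp
  have hR : ∀ j ∈ Finset.Icc 1 x,
      (1-q)^x * ((-1:ℝ)^(j+1) * (q/(1-q))^j * ((m.choose (x-j)) * q^(x-j) * (1-q)^(m-(x-j))))
        = ((-1:ℝ)^(j+1) * (m.choose (x-j))) * (q^x * (1-q)^m) := by
    intro j hj
    simp only [Finset.mem_Icc] at hj
    by_cases hxm : x - j ≤ m
    · have e1 : (1-q)^x = (1-q)^j * (1-q)^(x-j) := by rw [← pow_add]; congr 1; omega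
      have e2 : q^x = q^j * q^(x-j) := by rw [← pow_add]; congr 1; omega
      have e3 : (1-q)^m = (1-q)^(x-j) * (1-q)^(m-(x-j)) := by rw [← pow_add]; congr 1; omega
      rw [div_pow, e1, e2, e3]
      field_simp
    · rw [Nat.choose_eq_zero_of_lt (by omega)]; simp
  have hr : ((x:ℝ)) * ((m.choose x : ℕ):ℝ)
      = (m:ℝ) * ∑ j ∈ Finset.Icc 1 x, (-1:ℝ)^(j+1) * ((m.choose (x-j) : ℕ):ℝ) := by
    have h3 := congrArg (Int.cast : ℤ → ℝ) (intkey_aux m x hm hx)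
    push_cast at h3
    convert h3 using 2
  calc (1-q)^x * ((x:ℝ) * ((m.choose x) * q^x * (1-q)^(m-x)))
      = ((x:ℝ) * (m.choose x)) * (q^x * (1-q)^m) := hL
    _ = ((m:ℝ) * ∑ j ∈ Finset.Icc 1 x, (-1:ℝ)^(j+1) * ((m.choose (x-j) : ℕ):ℝ))
          * (q^x * (1-q)^m) := by rw [hr]
    _ = (m:ℝ) * ∑ j ∈ Finset.Icc 1 x,
          ((-1:ℝ)^(j+1) * ((m.choose (x-j) : ℕ):ℝ)) * (q^x * (1-q)^m) := by
        rw [mul_assoc, Finset.sum_mul]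
    _ = (m:ℝ) * ∑ j ∈ Finset.Icc 1 x, (1-q)^x
          * ((-1:ℝ)^(j+1) * (q/(1-q))^j * ((m.choose (x-j)) * q^(x-j) * (1-q)^(m-(x-j)))) := by
        rw [Finset.sum_congr rfl (fun j hj => (hR j hj).symm)]
    _ = (m:ℝ) * ((1-q)^x * ∑ j ∈ Finset.Icc 1 x,
          (-1:ℝ)^(j+1) * (q/(1-q))^j * ((m.choose (x-j)) * q^(x-j) * (1-q)^(m-(x-j)))) := by
        simp only [Finset.mul_sum]
    _ = (1-q)^x * ((m:ℝ) * ∑ j ∈ Finset.Icc 1 x,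
          (-1:ℝ)^(j+1) * (q/(1-q))^j * ((m.choose (x-j)) * q^(x-j) * (1-q)^(m-(x-j)))) := by
        ring


/-- If `X₁` has a binomial distribution with parameters `m ∈ ℕ⁺` and
`q ∈ (0, 1/2)`, and `X₁` is independent of `S₋₁`, then for every `k ≥ 1`,
`E[X₁ · 1_{S=k}] = m ∑_{j=1}^{k} (-1)^{j+1} (q/(1-q))^j P(S = k-j)`. -/
theorem expected_allocation_binomial
    {Ω : Type*} [MeasurableSpace Ω] (μ : Measure Ω) [IsProbabilityMeasure μ]
    (n : ℕ) (X : Fin (n + 1) → Ω → ℕ) (hX : ∀ i, Measurable (X i))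
    (S Sm : Ω → ℕ)
    (hS : ∀ ω, S ω = ∑ i, X i ω)
    (hSm : ∀ ω, Sm ω = ∑ i : Fin n, X i.succ ω)
    (m : ℕ) (hm : 0 < m) (q : ℝ) (hq : q ∈ Set.Ioo (0 : ℝ) (1 / 2))
    (hbin : ∀ k : ℕ, (μ {ω | X 0 ω = k}).toReal
      = (m.choose k) * q ^ k * (1 - q) ^ (m - k))
    (hindep : IndepFun (X 0) Sm μ) :
    ∀ k : ℕ, 1 ≤ k →
      ∫ ω in {ω | S ω = k}, (X 0 ω : ℝ) ∂μ
        = m * ∑ j ∈ Finset.Icc 1 k,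
            (-1 : ℝ) ^ (j + 1) * (q / (1 - q)) ^ j * (μ {ω | S ω = k - j}).toReal := by
  intro k hk
  obtain ⟨hq0, hq2⟩ := hq
  have hq1 : q < 1 := by linarith
  -- measurability facts
  have hSm_meas : Measurable Sm := by
    have : Sm = fun ω => ∑ i : Fin n, X i.succ ω := funext hSm
    rw [this]
    exact Finset.measurable_sum _ fun i _ => hX i.succ
  have hadd : ∀ ω, S ω = X 0 ω + Sm ω := by
    intro ω; rw [hS, hSm, Fin.sum_univ_succ]
  set B : ℕ → ℝ := fun x => (m.choose x) * q^x * (1-q)^(m-x) with hB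
  set p : ℕ → ℝ := fun y => (μ {ω | Sm ω = y}).toReal with hp
  set E : ℕ → ℕ → Set Ω := fun x y => {ω | X 0 ω = x} ∩ {ω | Sm ω = y} with hEdef
  have hmeasX : ∀ x : ℕ, MeasurableSet {ω | X 0 ω = x} :=
    fun x => hX 0 (measurableSet_singleton x)
  have hmeasSm : ∀ y : ℕ, MeasurableSet {ω | Sm ω = y} :=
    fun y => hSm_meas (measurableSet_singleton y)
  have hmeasE : ∀ x y, MeasurableSet (E x y) := fun x y => (hmeasX x).inter (hmeasSm y)
  have hmuE : ∀ x y, (μ (E x y)).toReal = B x * p y := by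
    intro x y
    have h := hindep.measure_inter_preimage_eq_mul {x} {y}
      (measurableSet_singleton x) (measurableSet_singleton y)
    have hE' : E x y = X 0 ⁻¹' {x} ∩ Sm ⁻¹' {y} := rfl
    rw [hE', h, ENNReal.toReal_mul]
    congr 1
    exact hbin x
  have hdecomp : ∀ t : ℕ, {ω | S ω = t} = ⋃ x ∈ Finset.range (t+1), E x (t-x) := by
    intro t
    ext ω
    simp only [Set.mem_setOf_eq, Set.mem_iUnion, Finset.mem_range, hEdef,
      Set.mem_inter_iff, exists_prop]
    have h2 := hadd ω
    constructor
    · intro h; exact ⟨X 0 ω, by omega, rfl, by omega⟩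
    · rintro ⟨x, hx, h1, h3⟩; omega
  have hdisj : ∀ t : ℕ, (↑(Finset.range (t+1)) : Set ℕ).Pairwise
      (Function.onFun Disjoint (fun x => E x (t-x))) := by
    intro t x _ y _ hxy
    apply Set.disjoint_left.mpr
    rintro ω ⟨h1, _⟩ ⟨h2, _⟩
    exact hxy (h1.symm.trans h2)
  have hP : ∀ t : ℕ, (μ {ω | S ω = t}).toReal
      = ∑ x ∈ Finset.range (t+1), B x * p (t-x) := by
    intro t
    rw [hdecomp t, measure_biUnion_finset (hdisj t) (fun x _ => hmeasE x (t-x)),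
      ENNReal.toReal_sum (fun x _ => measure_ne_top μ _)]
    exact Finset.sum_congr rfl fun x _ => hmuE x (t-x)
  have hInt : ∫ ω in {ω | S ω = k}, (X 0 ω : ℝ) ∂μ
      = ∑ x ∈ Finset.range (k+1), (x:ℝ) * (B x * p (k-x)) := by
    rw [hdecomp k]
    rw [integral_biUnion_finset _ (fun x _ => hmeasE x (k-x)) (hdisj k) ?_]
    · apply Finset.sum_congr rfl
      intro x _
      rw [setIntegral_congr_fun (hmeasE x (k-x)) (g := fun _ => (x:ℝ))
        (fun ω hω => by have h1 : X 0 ω = x := hω.1; simp [h1])]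
      rw [setIntegral_const, smul_eq_mul, measureReal_def, hmuE]
      ring
    · intro x _
      have hc : IntegrableOn (fun _ : Ω => (x:ℝ)) (E x (k-x)) μ :=
        integrableOn_const (measure_lt_top μ _).ne
      exact hc.congr_fun
        (fun ω hω => by have h1 : X 0 ω = x := hω.1; simp [h1])
        (hmeasE _ _)
  rw [hInt]
  have hRHS : ∀ j ∈ Finset.Icc 1 k,
      (-1 : ℝ) ^ (j + 1) * (q / (1 - q)) ^ j * (μ {ω | S ω = k - j}).toReal
        = ∑ z ∈ Finset.range (k-j+1),
            (-1 : ℝ) ^ (j + 1) * (q / (1 - q)) ^ j * B z * p (k-j-z) := by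
    intro j hj
    rw [hP (k-j), Finset.mul_sum]
    exact Finset.sum_congr rfl fun z _ => by ring
  rw [Finset.sum_congr rfl hRHS]
  have hLHS : ∀ x ∈ Finset.range (k+1),
      (x:ℝ) * (B x * p (k-x))
        = m * ∑ j ∈ Finset.Icc 1 x,
            (-1 : ℝ) ^ (j + 1) * (q / (1 - q)) ^ j * B (x-j) * p (k-x) := by
    intro x _
    have hkey := realkey_aux m hm q hq0 hq1 x
    calc (x:ℝ) * (B x * p (k-x)) = ((x:ℝ) * B x) * p (k-x) := by ring
      _ = (m * ∑ j ∈ Finset.Icc 1 x,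
            (-1 : ℝ) ^ (j + 1) * (q / (1 - q)) ^ j * B (x-j)) * p (k-x) := by
          rw [hB]; rw [hkey]
      _ = m * ∑ j ∈ Finset.Icc 1 x,
            (-1 : ℝ) ^ (j + 1) * (q / (1 - q)) ^ j * B (x-j) * p (k-x) := by
          rw [mul_assoc, Finset.sum_mul]
  rw [Finset.sum_congr rfl hLHS, ← Finset.mul_sum]
  congr 1
  rw [Finset.sum_sigma' (Finset.range (k+1)) (fun x => Finset.Icc 1 x)
    (fun x j => (-1 : ℝ) ^ (j + 1) * (q / (1 - q)) ^ j * B (x-j) * p (k-x)),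
    Finset.sum_sigma' (Finset.Icc 1 k) (fun j => Finset.range (k-j+1))
    (fun j z => (-1 : ℝ) ^ (j + 1) * (q / (1 - q)) ^ j * B z * p (k-j-z))]
  refine Finset.sum_nbij' (fun a => ⟨a.2, a.1 - a.2⟩) (fun b => ⟨b.1 + b.2, b.1⟩) ?_ ?_ ?_ ?_ ?_
  · rintro ⟨x, j⟩ ha
    simp only [Finset.mem_sigma, Finset.mem_range, Finset.mem_Icc] at ha ⊢
    omega
  · rintro ⟨j, z⟩ hb
    simp only [Finset.mem_sigma, Finset.mem_range, Finset.mem_Icc] at hb ⊢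
    omega
  · rintro ⟨x, j⟩ ha
    simp only [Finset.mem_sigma, Finset.mem_range, Finset.mem_Icc] at ha
    have hxj : j + (x - j) = x := by omega
    simp [hxj]
  · rintro ⟨j, z⟩ hb
    simp only [Finset.mem_sigma, Finset.mem_range, Finset.mem_Icc] at hb
    have hjz : j + z - j = z := by omega
    simp [hjz]
  · rintro ⟨x, j⟩ ha
    simp only [Finset.mem_sigma, Finset.mem_range, Finset.mem_Icc] at ha
    have : k - j - (x - j) = k - x := by omega
    simp only [this]
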